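/- (Magic robustness lower bound for the T state via an explicit witness.) Let X, Y, Z denote the 2×2 Pauli matrices, let |T⟩ = (|0⟩ + e^{iπ/4}|1⟩)/√2, and let L_stab be the convex hull of the six single-qubit pure stabilizer states, i.e., the projectors onto the normalized eigenvectors of X, Y, and Z (namely |0⟩⟨0|, |1⟩⟨1|, |+⟩⟨+|, |−⟩⟨−|, |+i⟩⟨+i|, |−i⟩⟨−i|). Let Y₁ = (I + (X+Y)/√2)/(1 + 1/√2). Then: (i) Y₁ is positive semidefinite; (ii) Re Tr[Y₁ σ] ≤ 1 for every σ ∈ L_stab; (iii) Re Tr[Y₁ |T⟩⟨T|] = 4 − 2√2; and consequently (iv) the generalized robustness of magic satisfies R_{L_stab}(|T⟩⟨T|) ≥ 3 − 2√2. -/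

import Mathlib

open Matrix ComplexOrder

/-- A density matrix: positive semidefinite with unit trace. -/
def IsDensityMatrix {n : Type*} [Fintype n] (ρ : Matrix n n ℂ) : Prop :=
  ρ.PosSemidef ∧ ρ.trace = 1

/-- The generalized robustness of `ρ` with respect to the free set `L`. -/
noncomputable def robustness {n : Type*} [Fintype n]
    (L : Set (Matrix n n ℂ)) (ρ : Matrix n n ℂ) : ℝ :=
  sInf { s : ℝ | 0 ≤ s ∧ ∃ γ : Matrix n n ℂ, IsDensityMatrix γ ∧
    (1 + s)⁻¹ • (ρ + s • γ) ∈ L }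

/-- The Pauli `X` matrix. -/
def pauliX : Matrix (Fin 2) (Fin 2) ℂ := !![0, 1; 1, 0]

/-- The Pauli `Y` matrix. -/
def pauliY : Matrix (Fin 2) (Fin 2) ℂ := !![0, -Complex.I; Complex.I, 0]

/-- The six single-qubit pure stabilizer states: projectors onto the normalized
eigenvectors of the Pauli matrices `X`, `Y`, `Z`. -/
noncomputable def stabilizerProjectors : Set (Matrix (Fin 2) (Fin 2) ℂ) :=
  { !![1, 0; 0, 0], !![0, 0; 0, 1],
    !![1/2, 1/2; 1/2, 1/2], !![1/2, -(1/2); -(1/2), 1/2],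
    !![1/2, -Complex.I/2; Complex.I/2, 1/2], !![1/2, Complex.I/2; -Complex.I/2, 1/2] }

/-- The set of single-qubit stabilizer states: the convex hull (over `ℝ`) of the
six pure stabilizer states. -/
noncomputable def stabSet : Set (Matrix (Fin 2) (Fin 2) ℂ) :=
  convexHull ℝ stabilizerProjectors

/-- The witness `Y₁ = (I + (X+Y)/√2)/(1 + 1/√2)`. -/
noncomputable def magicWitness : Matrix (Fin 2) (Fin 2) ℂ :=
  ((1 + 1 / Real.sqrt 2 : ℝ))⁻¹ •
    ((1 : Matrix (Fin 2) (Fin 2) ℂ) + (Real.sqrt 2 : ℝ)⁻¹ • (pauliX + pauliY))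

/-- The projector `|T⟩⟨T|` onto the `T` state `|T⟩ = (|0⟩ + e^{iπ/4}|1⟩)/√2`. -/
noncomputable def Tproj : Matrix (Fin 2) (Fin 2) ℂ :=
  vecMulVec ![1 / (Real.sqrt 2 : ℂ), Complex.exp (Complex.I * (Real.pi / 4 : ℂ)) / (Real.sqrt 2 : ℂ)]
    (star ![1 / (Real.sqrt 2 : ℂ), Complex.exp (Complex.I * (Real.pi / 4 : ℂ)) / (Real.sqrt 2 : ℂ)])

/- ### Auxiliary lemmas -/

lemma aux_sq2 : Real.sqrt 2 * Real.sqrt 2 = 2 := Real.mul_self_sqrt (by norm_num)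

lemma aux_s2pos : (0:ℝ) < Real.sqrt 2 := Real.sqrt_pos.2 (by norm_num)

lemma aux_h2c : ((Real.sqrt 2 : ℝ) : ℂ) * ((Real.sqrt 2 : ℝ) : ℂ) = 2 := by
  norm_cast; exact aux_sq2

lemma aux_hexp : Complex.exp (Complex.I * (Real.pi / 4 : ℂ)) =
    ((Real.sqrt 2 / 2 : ℝ) : ℂ) * (1 + Complex.I) := by
  have h : (Complex.I * (Real.pi / 4 : ℂ)) = ((Real.pi / 4 : ℝ) : ℂ) * Complex.I := by
    push_cast; ring
  rw [h, Complex.exp_mul_I, ← Complex.ofReal_cos, ← Complex.ofReal_sin,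
    Real.cos_pi_div_four, Real.sin_pi_div_four]
  ring

lemma aux_Tproj_eq : Tproj = !![(1/2 : ℂ), ((Real.sqrt 2/4 : ℝ):ℂ)*(1 - Complex.I);
    ((Real.sqrt 2/4:ℝ):ℂ)*(1+Complex.I), (1/2:ℂ)] := by
  ext i j
  fin_cases i <;> fin_cases j <;>
    simp [Tproj, vecMulVec_apply, aux_hexp, Complex.ext_iff, Complex.div_re, Complex.div_im,
      Complex.normSq] <;>
    field_simp <;>
    first
      | (constructor <;> nlinarith [aux_sq2, aux_s2pos])
      | nlinarith [aux_sq2, aux_s2pos]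

lemma aux_magicWitness_eq : magicWitness =
    !![((2 - Real.sqrt 2 :ℝ):ℂ), ((Real.sqrt 2 - 1 :ℝ):ℂ) * (1 - Complex.I);
      ((Real.sqrt 2 - 1:ℝ):ℂ) * (1 + Complex.I), ((2 - Real.sqrt 2:ℝ):ℂ)] := by
  have hc' : ((1 + 1 / Real.sqrt 2 : ℝ))⁻¹ = 2 - Real.sqrt 2 := by
    have h1 : (1 + 1 / Real.sqrt 2 : ℝ) ≠ 0 := by positivity
    field_simp
    nlinarith [aux_sq2, aux_s2pos]
  rw [magicWitness, hc']
  ext i j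
  fin_cases i <;> fin_cases j <;>
    simp [pauliX, pauliY, Complex.ext_iff, Complex.ofReal_inv] <;>
    field_simp <;>
    first
      | (constructor <;> nlinarith [aux_sq2, aux_s2pos])
      | nlinarith [aux_sq2, aux_s2pos]

lemma aux_psd : magicWitness.PosSemidef := by
  rw [aux_magicWitness_eq]
  apply Matrix.PosSemidef.of_dotProduct_mulVec_nonneg
  · ext i j
    fin_cases i <;> fin_cases j <;>
      simp [Matrix.conjTranspose_apply, Complex.ext_iff]
  · intro x
    have key : star x ⬝ᵥ (!![((2 - Real.sqrt 2 :ℝ):ℂ), ((Real.sqrt 2 - 1 :ℝ):ℂ) * (1 - Complex.I);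
        ((Real.sqrt 2 - 1:ℝ):ℂ) * (1 + Complex.I), ((2 - Real.sqrt 2:ℝ):ℂ)] : Matrix (Fin 2) (Fin 2) ℂ).mulVec x
        = ((2 - Real.sqrt 2 :ℝ):ℂ) * ((x 0 + (1 - Complex.I) * ((↑(Real.sqrt 2):ℂ)/2) * x 1) *
            (starRingEnd ℂ) (x 0 + (1 - Complex.I) * ((↑(Real.sqrt 2):ℂ)/2) * x 1)) := by
      simp [dotProduct, Matrix.mulVec, Fin.sum_univ_two, map_add, _root_.map_mul,
        map_div₀, map_sub, _root_.map_one, Complex.conj_I, Complex.conj_ofReal, map_ofNat]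
      linear_combination ((1 - Complex.I)/2 * (starRingEnd ℂ) (x 0) * x 1
          + (1 + Complex.I)/2 * x 0 * (starRingEnd ℂ) (x 1)
          - (2 - (↑(Real.sqrt 2):ℂ))/2 * (starRingEnd ℂ) (x 1) * x 1) * aux_h2c
        + ((2 - (↑(Real.sqrt 2):ℂ)) * (↑(Real.sqrt 2):ℂ) * (↑(Real.sqrt 2):ℂ)/4
          * (starRingEnd ℂ) (x 1) * x 1) * Complex.I_mul_I
    rw [key, Complex.mul_conj]
    have h1 : (0:ℝ) ≤ 2 - Real.sqrt 2 := by nlinarith [aux_sq2, aux_s2pos]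
    rw [← Complex.ofReal_mul]
    exact Complex.zero_le_real.2 (mul_nonneg h1 (Complex.normSq_nonneg _))

lemma aux_stab_bound : ∀ σ ∈ stabSet, ((magicWitness * σ).trace).re ≤ 1 := by
  intro σ hσ
  have hconv : Convex ℝ {σ : Matrix (Fin 2) (Fin 2) ℂ | ((magicWitness * σ).trace).re ≤ 1} := by
    intro σ hσ τ hτ a b ha hb hab
    simp only [Set.mem_setOf_eq] at *
    have expand : magicWitness * (a • σ + b • τ) = a • (magicWitness * σ) + b • (magicWitness * τ) := by
      rw [Matrix.mul_add, Matrix.mul_smul, Matrix.mul_smul]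
    rw [expand, Matrix.trace_add, Matrix.trace_smul, Matrix.trace_smul, Complex.add_re,
      Complex.smul_re, Complex.smul_re]
    have h1 := mul_le_mul_of_nonneg_left hσ ha
    have h2 := mul_le_mul_of_nonneg_left hτ hb
    simp only [smul_eq_mul]
    nlinarith
  have hsub : stabilizerProjectors ⊆ {σ : Matrix (Fin 2) (Fin 2) ℂ | ((magicWitness * σ).trace).re ≤ 1} := by
    intro σ hσ
    simp only [stabilizerProjectors, Set.mem_insert_iff, Set.mem_singleton_iff] at hσ
    simp only [Set.mem_setOf_eq, aux_magicWitness_eq]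
    rcases hσ with h | h | h | h | h | h <;> subst h <;>
      simp [Matrix.trace_fin_two, Matrix.mul_apply, Fin.sum_univ_two, Complex.add_re,
        Complex.mul_re, Complex.sub_re, Complex.div_re, Complex.ofReal_re, Complex.ofReal_im,
        Complex.I_re, Complex.I_im, Complex.normSq] <;>
      nlinarith [aux_sq2, aux_s2pos]
  exact convexHull_min hsub hconv hσ

lemma aux_trace_T : ((magicWitness * Tproj).trace).re = 4 - 2 * Real.sqrt 2 := by
  rw [aux_magicWitness_eq, aux_Tproj_eq]
  simp [Matrix.trace_fin_two, Matrix.mul_apply, Fin.sum_univ_two, Complex.add_re,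
    Complex.mul_re, Complex.mul_im, Complex.sub_re, Complex.sub_im, Complex.add_im,
    Complex.ofReal_re, Complex.ofReal_im, Complex.I_re, Complex.I_im, Complex.div_re,
    Complex.div_im, Complex.normSq]
  nlinarith [aux_sq2, aux_s2pos]

/-- `1 - Tproj` in explicit form. -/
lemma aux_gamma_eq : (1 : Matrix (Fin 2) (Fin 2) ℂ) - Tproj =
    !![(1/2 : ℂ), -(((Real.sqrt 2/4 : ℝ):ℂ)*(1 - Complex.I));
      -(((Real.sqrt 2/4:ℝ):ℂ)*(1+Complex.I)), (1/2:ℂ)] := by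
  rw [aux_Tproj_eq]
  ext i j
  fin_cases i <;> fin_cases j <;> simp [Matrix.one_apply] <;> ring

lemma aux_gamma_psd : ((1 : Matrix (Fin 2) (Fin 2) ℂ) - Tproj).PosSemidef := by
  rw [aux_gamma_eq]
  apply Matrix.PosSemidef.of_dotProduct_mulVec_nonneg
  · ext i j
    fin_cases i <;> fin_cases j <;>
      simp [Matrix.conjTranspose_apply, Complex.ext_iff]
  · intro x
    have key : star x ⬝ᵥ (!![(1/2 : ℂ), -(((Real.sqrt 2/4 : ℝ):ℂ)*(1 - Complex.I));
        -(((Real.sqrt 2/4:ℝ):ℂ)*(1+Complex.I)), (1/2:ℂ)] : Matrix (Fin 2) (Fin 2) ℂ).mulVec x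
        = (1/2 : ℂ) * ((x 0 - (1 - Complex.I) * ((↑(Real.sqrt 2):ℂ)/2) * x 1) *
            (starRingEnd ℂ) (x 0 - (1 - Complex.I) * ((↑(Real.sqrt 2):ℂ)/2) * x 1)) := by
      simp [dotProduct, Matrix.mulVec, Fin.sum_univ_two, map_add, _root_.map_mul,
        map_div₀, map_sub, _root_.map_one, Complex.conj_I, Complex.conj_ofReal, map_ofNat]
      linear_combination (-(starRingEnd ℂ) (x 1) * x 1/4) * aux_h2c
        + ((↑(Real.sqrt 2):ℂ) * (↑(Real.sqrt 2):ℂ)/8 * (starRingEnd ℂ) (x 1) * x 1) * Complex.I_mul_I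
    rw [key, Complex.mul_conj]
    have : ((1:ℝ)/2 : ℂ) = ((1/2 : ℝ) : ℂ) := by norm_num
    rw [show (1/2 : ℂ) = ((1/2 : ℝ) : ℂ) by norm_num, ← Complex.ofReal_mul]
    exact Complex.zero_le_real.2 (mul_nonneg (by norm_num) (Complex.normSq_nonneg _))

lemma aux_trace_nonneg (γ : Matrix (Fin 2) (Fin 2) ℂ) (hγ : γ.PosSemidef) :
    0 ≤ ((magicWitness * γ).trace).re := by
  set u : Fin 2 → ℂ := ![1, (1 + Complex.I) * ((↑(Real.sqrt 2):ℂ)/2)] with hu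
  have hq := hγ.dotProduct_mulVec_nonneg u
  have key : (magicWitness * γ).trace = ((2 - Real.sqrt 2 :ℝ):ℂ) * (star u ⬝ᵥ γ.mulVec u) := by
    rw [aux_magicWitness_eq]
    simp [Matrix.trace_fin_two, Matrix.mul_apply, Fin.sum_univ_two, dotProduct,
      Matrix.mulVec, Matrix.vecMul, hu, map_add, _root_.map_mul, map_div₀, _root_.map_one,
      Complex.conj_I, Complex.conj_ofReal, map_ofNat]
    linear_combination ((1 + Complex.I)/2 * γ 0 1 + (1 - Complex.I)/2 * γ 1 0
        - (2 - (↑(Real.sqrt 2):ℂ))/2 * γ 1 1) * aux_h2c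
      + ((2 - (↑(Real.sqrt 2):ℂ)) * (↑(Real.sqrt 2):ℂ) * (↑(Real.sqrt 2):ℂ)/4 * γ 1 1) * Complex.I_mul_I
  rw [key, Complex.mul_re, Complex.ofReal_re, Complex.ofReal_im]
  have hre : 0 ≤ (star u ⬝ᵥ γ.mulVec u).re := (Complex.le_def.1 hq).1
  have h1 : (0:ℝ) ≤ 2 - Real.sqrt 2 := by nlinarith [aux_sq2, aux_s2pos]
  simp only [zero_mul, sub_zero]
  exact mul_nonneg h1 hre

lemma aux_Tproj_trace : Tproj.trace = 1 := by
  rw [aux_Tproj_eq, Matrix.trace_fin_two]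
  norm_num

/-- Magic robustness lower bound for the `T` state via the explicit witness
`Y₁ = (I + (X+Y)/√2)/(1 + 1/√2)`: (i) `Y₁` is positive semidefinite, (ii) `Y₁`
is feasible on stabilizer states, (iii) its value on `|T⟩⟨T|` is `4 − 2√2`, and
consequently (iv) the generalized robustness of magic of `|T⟩⟨T|` is at least
`3 − 2√2`. -/
theorem magic_robustness_T_state :
    magicWitness.PosSemidef ∧
      (∀ σ ∈ stabSet, ((magicWitness * σ).trace).re ≤ 1) ∧
      ((magicWitness * Tproj).trace).re = 4 - 2 * Real.sqrt 2 ∧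
      robustness stabSet Tproj ≥ 3 - 2 * Real.sqrt 2 := by
  refine ⟨aux_psd, aux_stab_bound, aux_trace_T, ?_⟩
  -- robustness bound
  have hne : (1:ℝ) ∈ { s : ℝ | 0 ≤ s ∧ ∃ γ : Matrix (Fin 2) (Fin 2) ℂ, IsDensityMatrix γ ∧
      (1 + s)⁻¹ • (Tproj + s • γ) ∈ stabSet } := by
    refine ⟨zero_le_one, (1 : Matrix (Fin 2) (Fin 2) ℂ) - Tproj, ⟨aux_gamma_psd, ?_⟩, ?_⟩
    · rw [Matrix.trace_sub, Matrix.trace_one, aux_Tproj_trace]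
      norm_num
    · have hval : ((1:ℝ) + 1)⁻¹ • (Tproj + (1:ℝ) • ((1 : Matrix (Fin 2) (Fin 2) ℂ) - Tproj))
          = ((1/2 : ℝ) • (!![1, 0; 0, 0] : Matrix (Fin 2) (Fin 2) ℂ)
            + (1/2 : ℝ) • (!![0, 0; 0, 1] : Matrix (Fin 2) (Fin 2) ℂ)) := by
        ext i j
        fin_cases i <;> fin_cases j <;>
          simp [Matrix.one_apply] <;> norm_num
      rw [hval]
      have h0 : (!![1, 0; 0, 0] : Matrix (Fin 2) (Fin 2) ℂ) ∈ stabilizerProjectors := by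
        simp [stabilizerProjectors]
      have h1 : (!![0, 0; 0, 1] : Matrix (Fin 2) (Fin 2) ℂ) ∈ stabilizerProjectors := by
        simp [stabilizerProjectors]
      exact (convex_convexHull ℝ stabilizerProjectors)
        (subset_convexHull ℝ _ h0) (subset_convexHull ℝ _ h1)
        (by norm_num) (by norm_num) (by norm_num)
  refine le_csInf ⟨1, hne⟩ ?_
  rintro s ⟨hs0, γ, ⟨hγpsd, -⟩, hmem⟩
  have hbound := aux_stab_bound _ hmem
  have h1s : (0:ℝ) < 1 + s := by linarith
  have expand : magicWitness * ((1 + s)⁻¹ • (Tproj + s • γ))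
      = (1 + s)⁻¹ • (magicWitness * Tproj + s • (magicWitness * γ)) := by
    rw [Matrix.mul_smul, Matrix.mul_add, Matrix.mul_smul]
  rw [expand, Matrix.trace_smul, Complex.smul_re, Matrix.trace_add, Complex.add_re,
    Matrix.trace_smul, Complex.smul_re, aux_trace_T] at hbound
  have hg := aux_trace_nonneg γ hγpsd
  have hA : 4 - 2 * Real.sqrt 2 + s * ((magicWitness * γ).trace).re ≤ 1 + s := by
    rw [smul_eq_mul, smul_eq_mul, inv_mul_le_iff₀ h1s, mul_one] at hbound
    linarith
  nlinarith [mul_nonneg hs0 hg]
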